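/- arXiv:2104.01545 — 3 statements merged into one kernel-verified Lean document; each statement's English description precedes it below -/
import Mathlib

section
/- (Concavity-preservation of the belief-MDP Bellman backup; key step for Theorem 2.) In the filter setup, let J : Δ^N → ℝ be concave. Then for every u ∈ 𝒰 the function π ↦ Σ_{y ∈ 𝒴, σ(π,u,y) > 0} σ(π,u,y) · J( Π(π,u,y) ) is concave on Δ^N. -/
open Finset

/-- The probability simplex `Δ^N` in `ℝ^N`. -/
def stdSimplex' (N : ℕ) : Set (Fin N → ℝ) :=
  {π | (∀ i, 0 ≤ π i) ∧ ∑ i, π i = 1}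

/-- Unnormalised Bayesian filter update `𝐓(π,u,y)_i = B(y|i,u) Σ_j A_{ij}(u) π_j`. -/
noncomputable def Tvec {N : ℕ} {U Y : Type*} [Fintype Y]
    (A : U → Fin N → Fin N → ℝ) (B : Y → Fin N → U → ℝ)
    (π : Fin N → ℝ) (u : U) (y : Y) : Fin N → ℝ :=
  fun i => B y i u * ∑ j, A u i j * π j

/-- The normaliser `σ(π,u,y) = Σ_i 𝐓(π,u,y)_i`. -/
noncomputable def sigNorm {N : ℕ} {U Y : Type*} [Fintype Y]
    (A : U → Fin N → Fin N → ℝ) (B : Y → Fin N → U → ℝ)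
    (π : Fin N → ℝ) (u : U) (y : Y) : ℝ :=
  ∑ i, Tvec A B π u y i

/-- The belief update `Π(π,u,y) = 𝐓(π,u,y) / σ(π,u,y)`. -/
noncomputable def belUpd {N : ℕ} {U Y : Type*} [Fintype Y]
    (A : U → Fin N → Fin N → ℝ) (B : Y → Fin N → U → ℝ)
    (π : Fin N → ℝ) (u : U) (y : Y) : Fin N → ℝ :=
  fun i => Tvec A B π u y i / sigNorm A B π u y

open scoped Classical in
/-- The Bellman-backup expectation `Σ_{y : σ(π,u,y) > 0} σ(π,u,y) · J(Π(π,u,y))`. -/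
noncomputable def backup {N : ℕ} {U Y : Type*} [Fintype Y]
    (A : U → Fin N → Fin N → ℝ) (B : Y → Fin N → U → ℝ)
    (J : (Fin N → ℝ) → ℝ) (π : Fin N → ℝ) (u : U) : ℝ :=
  ∑ y : Y, if 0 < sigNorm A B π u y then sigNorm A B π u y * J (belUpd A B π u y) else 0

/-- **Concavity preservation of the belief-MDP Bellman backup** (key step for Theorem 2).
If `J : Δ^N → ℝ` is concave, then for every control `u` the function
`π ↦ Σ_{y : σ(π,u,y) > 0} σ(π,u,y) · J(Π(π,u,y))` is concave on `Δ^N`. -/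
theorem bellman_backup_concave
    (N : ℕ) (U Y : Type) [Fintype U] [Fintype Y]
    (A : U → Fin N → Fin N → ℝ) (B : Y → Fin N → U → ℝ)
    (hA : ∀ u i j, 0 ≤ A u i j) (hAcol : ∀ u j, ∑ i, A u i j = 1)
    (hB : ∀ y i u, 0 ≤ B y i u) (hBsum : ∀ i u, ∑ y, B y i u = 1)
    (J : (Fin N → ℝ) → ℝ) (hJ : ConcaveOn ℝ (stdSimplex' N) J) (u : U) :
    ConcaveOn ℝ (stdSimplex' N) (fun π => backup A B J π u) := by
  classical
  -- basic facts
  have hTnn : ∀ (π : Fin N → ℝ), π ∈ stdSimplex' N → ∀ y i, 0 ≤ Tvec A B π u y i := by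
    intro π hπ y i
    exact mul_nonneg (hB y i u)
      (Finset.sum_nonneg fun j _ => mul_nonneg (hA u i j) (hπ.1 j))
  have hsnn : ∀ (π : Fin N → ℝ), π ∈ stdSimplex' N → ∀ y, 0 ≤ sigNorm A B π u y := by
    intro π hπ y
    exact Finset.sum_nonneg fun i _ => hTnn π hπ y i
  have hTlin : ∀ (x y' : Fin N → ℝ) (a b : ℝ) (y : Y) (i : Fin N),
      Tvec A B (a • x + b • y') u y i = a * Tvec A B x u y i + b * Tvec A B y' u y i := by
    intro x y' a b y i
    have h : ∑ j, A u i j * (a * x j + b * y' j)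
        = a * ∑ j, A u i j * x j + b * ∑ j, A u i j * y' j := by
      rw [Finset.mul_sum, Finset.mul_sum, ← Finset.sum_add_distrib]
      exact Finset.sum_congr rfl fun j _ => by ring
    simp only [Tvec, Pi.add_apply, Pi.smul_apply, smul_eq_mul, h]
    ring
  have hslin : ∀ (x y' : Fin N → ℝ) (a b : ℝ) (y : Y),
      sigNorm A B (a • x + b • y') u y = a * sigNorm A B x u y + b * sigNorm A B y' u y := by
    intro x y' a b y
    simp only [sigNorm, Finset.mul_sum, ← Finset.sum_add_distrib]
    exact Finset.sum_congr rfl fun i _ => hTlin x y' a b y i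
  have hbel : ∀ (π : Fin N → ℝ), π ∈ stdSimplex' N → ∀ y, 0 < sigNorm A B π u y →
      belUpd A B π u y ∈ stdSimplex' N := by
    intro π hπ y hs
    constructor
    · intro i; exact div_nonneg (hTnn π hπ y i) hs.le
    · simp only [belUpd]
      rw [← Finset.sum_div]
      exact div_self hs.ne'
  constructor
  · exact convex_stdSimplex ℝ (Fin N)
  intro x hx y hy a b ha hb hab
  have hz : a • x + b • y ∈ stdSimplex' N := (convex_stdSimplex ℝ (Fin N)) hx hy ha hb hab
  simp only [backup, smul_eq_mul, Finset.mul_sum, ← Finset.sum_add_distrib]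
  apply Finset.sum_le_sum
  intro w _
  set s := sigNorm A B x u w with hs
  set s' := sigNorm A B y u w with hs'
  have hsz : sigNorm A B (a • x + b • y) u w = a * s + b * s' := hslin x y a b w
  by_cases hz0 : 0 < sigNorm A B (a • x + b • y) u w
  · rw [if_pos hz0]
    -- subcases on s, s'
    have hsx := hsnn x hx w
    have hsy := hsnn y hy w
    by_cases hsp : 0 < s
    · by_cases hsp' : 0 < s'
      · rw [if_pos hsp, if_pos hsp']
        set σz := sigNorm A B (a • x + b • y) u w with hσz
        have hzne : σz ≠ 0 := hz0.ne'
        have key : (a * s / σz) • J (belUpd A B x u w) + (b * s' / σz) • J (belUpd A B y u w)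
            ≤ J ((a * s / σz) • belUpd A B x u w + (b * s' / σz) • belUpd A B y u w) := by
          apply hJ.2 (hbel x hx w hsp) (hbel y hy w hsp')
          · positivity
          · positivity
          · rw [← add_div, ← hsz, div_self hzne]
        have hcomb : (a * s / σz) • belUpd A B x u w + (b * s' / σz) • belUpd A B y u w
            = belUpd A B (a • x + b • y) u w := by
          funext i
          simp only [Pi.add_apply, Pi.smul_apply, smul_eq_mul, belUpd, hTlin x y a b w i, ← hσz]
          field_simp
          rw [← hs, ← hs', mul_right_comm a s, mul_div_cancel_right₀ _ hsp.ne', mul_right_comm b s', mul_div_cancel_right₀ _ hsp'.ne']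
        rw [hcomb] at key
        have := mul_le_mul_of_nonneg_left key hz0.le
        calc a * (s * J (belUpd A B x u w)) + b * (s' * J (belUpd A B y u w))
            = σz * ((a * s / σz) • J (belUpd A B x u w) + (b * s' / σz) • J (belUpd A B y u w)) := by
              simp only [smul_eq_mul]; field_simp
          _ ≤ σz * J (belUpd A B (a • x + b • y) u w) := this
      · -- s' = 0
        have hs'0 : s' = 0 := le_antisymm (not_lt.mp hsp') hsy
        rw [if_pos hsp, if_neg hsp']
        have hT'0 : ∀ i, Tvec A B y u w i = 0 := by
          intro i
          have := (Finset.sum_eq_zero_iff_of_nonneg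
            (fun i _ => hTnn y hy w i)).mp hs'0 i (Finset.mem_univ i)
          exact this
        have haspos : 0 < a * s := by
          rw [hsz, hs'0, mul_zero, add_zero] at hz0; exact hz0
        have hapos : 0 < a := by
          rcases ha.lt_or_eq with h | h
          · exact h
          · exfalso; rw [← h, zero_mul] at haspos; exact lt_irrefl 0 haspos
        have heq : belUpd A B (a • x + b • y) u w = belUpd A B x u w := by
          funext i
          simp only [belUpd, hTlin x y a b w i, hT'0 i, mul_zero, add_zero, hsz, hs'0]
          rw [mul_div_mul_left _ _ hapos.ne']
        rw [heq, hsz, hs'0, mul_zero, add_zero]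
        ring_nf
        simp
    · -- s = 0
      have hs0 : s = 0 := le_antisymm (not_lt.mp hsp) hsx
      rw [if_neg hsp]
      have hT0 : ∀ i, Tvec A B x u w i = 0 := by
        intro i
        exact (Finset.sum_eq_zero_iff_of_nonneg
          (fun i _ => hTnn x hx w i)).mp hs0 i (Finset.mem_univ i)
      have hbspos : 0 < b * s' := by
        rw [hsz, hs0, mul_zero, zero_add] at hz0; exact hz0
      have hbpos : 0 < b := by
        rcases hb.lt_or_eq with h | h
        · exact h
        · exfalso; rw [← h, zero_mul] at hbspos; exact lt_irrefl 0 hbspos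
      have hsp' : 0 < s' := by nlinarith
      rw [if_pos hsp']
      have heq : belUpd A B (a • x + b • y) u w = belUpd A B y u w := by
        funext i
        simp only [belUpd, hTlin x y a b w i, hT0 i, mul_zero, zero_add, hsz, hs0]
        rw [mul_div_mul_left _ _ hbpos.ne']
      rw [heq, hsz, hs0, mul_zero, zero_add]
      ring_nf
      simp
  · -- σz = 0
    rw [if_neg hz0]
    have hσ0 : a * s + b * s' = 0 := by
      rw [← hsz]; exact le_antisymm (not_lt.mp hz0) (hsnn _ hz w)
    have hasnn : 0 ≤ a * s := mul_nonneg ha (hsnn x hx w)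
    have hbsnn : 0 ≤ b * s' := mul_nonneg hb (hsnn y hy w)
    have has0 : a * s = 0 := by linarith
    have hbs0 : b * s' = 0 := by linarith
    have h1 : a * (if 0 < s then s * J (belUpd A B x u w) else 0) = 0 := by
      split_ifs with h
      · rcases mul_eq_zero.mp has0 with h' | h'
        · rw [h', zero_mul]
        · exact absurd h' h.ne'
      · exact mul_zero a
    have h2 : b * (if 0 < s' then s' * J (belUpd A B y u w) else 0) = 0 := by
      split_ifs with h
      · rcases mul_eq_zero.mp hbs0 with h' | h'
        · rw [h', zero_mul]
        · exact absurd h' h.ne'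
      · exact mul_zero b
    rw [h1, h2, add_zero]
end

section
/- (Theorem 2, concavity of the value function.) In the filter setup, fix a horizon T ≥ 1, functions g_k : Δ^N × 𝒰 → ℝ for 0 ≤ k ≤ T−1 such that π ↦ g_k(π,u) is concave on Δ^N for each u ∈ 𝒰, and a concave terminal cost g_T : Δ^N → ℝ. Define value functions by backward recursion: J_T(π) = g_T(π), and for 0 ≤ k ≤ T−1, J_k(π) = min_{u ∈ 𝒰} [ g_k(π,u) + Σ_{y ∈ 𝒴, σ(π,u,y) > 0} σ(π,u,y) · J_{k+1}( Π(π,u,y) ) ]. Then J_k is concave on Δ^N for every 0 ≤ k ≤ T. -/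
open Finset

section Aux

variable {N : ℕ} {U Y : Type*} [Fintype Y]
  {A : U → Fin N → Fin N → ℝ} {B : Y → Fin N → U → ℝ}

lemma convex_stdSimplex'_aux (N : ℕ) : Convex ℝ (stdSimplex' N) := by
  intro x hx z hz a b ha hb hab
  refine ⟨fun i => ?_, ?_⟩
  · have := hx.1 i; have := hz.1 i
    simp only [Pi.add_apply, Pi.smul_apply, smul_eq_mul]
    nlinarith
  · simp only [Pi.add_apply, Pi.smul_apply, smul_eq_mul]
    rw [Finset.sum_add_distrib, ← Finset.mul_sum, ← Finset.mul_sum, hx.2, hz.2]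
    linarith

lemma concaveOn_congr_aux {s : Set (Fin N → ℝ)} {f g : (Fin N → ℝ) → ℝ}
    (hfg : ∀ x ∈ s, f x = g x) (hg : ConcaveOn ℝ s g) : ConcaveOn ℝ s f := by
  refine ⟨hg.1, fun x hx z hz a b ha hb hab => ?_⟩
  rw [hfg x hx, hfg z hz, hfg _ (hg.1 hx hz ha hb hab)]
  exact hg.2 hx hz ha hb hab

lemma concaveOn_inf'_aux {ι : Type*} (t : Finset ι) (ht : t.Nonempty)
    {s : Set (Fin N → ℝ)} (hs : Convex ℝ s) (f : ι → (Fin N → ℝ) → ℝ)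
    (h : ∀ i ∈ t, ConcaveOn ℝ s (f i)) :
    ConcaveOn ℝ s (fun x => t.inf' ht fun i => f i x) := by
  refine ⟨hs, fun x hx z hz a b ha hb hab => ?_⟩
  dsimp only
  obtain ⟨i, hi, hmin⟩ := t.exists_mem_eq_inf' ht (fun i => f i (a • x + b • z))
  rw [hmin]
  have hcc := (h i hi).2 hx hz ha hb hab
  refine le_trans (add_le_add ?_ ?_) hcc
  · simpa [smul_eq_mul] using
      mul_le_mul_of_nonneg_left (Finset.inf'_le (fun j => f j x) hi) ha
  · simpa [smul_eq_mul] using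
      mul_le_mul_of_nonneg_left (Finset.inf'_le (fun j => f j z) hi) hb

lemma Tvec_nonneg_aux (hA : ∀ u i j, 0 ≤ A u i j) (hB : ∀ y i u, 0 ≤ B y i u)
    {π : Fin N → ℝ} (hπ : ∀ i, 0 ≤ π i) (u : U) (y : Y) (i : Fin N) :
    0 ≤ Tvec A B π u y i := by
  apply mul_nonneg (hB y i u)
  exact Finset.sum_nonneg fun j _ => mul_nonneg (hA u i j) (hπ j)

lemma sigNorm_nonneg_aux (hA : ∀ u i j, 0 ≤ A u i j) (hB : ∀ y i u, 0 ≤ B y i u)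
    {π : Fin N → ℝ} (hπ : ∀ i, 0 ≤ π i) (u : U) (y : Y) :
    0 ≤ sigNorm A B π u y :=
  Finset.sum_nonneg fun i _ => Tvec_nonneg_aux hA hB hπ u y i

lemma Tvec_comb_aux (x z : Fin N → ℝ) (a b : ℝ) (u : U) (y : Y) (i : Fin N) :
    Tvec A B (a • x + b • z) u y i = a * Tvec A B x u y i + b * Tvec A B z u y i := by
  simp only [Tvec, Pi.add_apply, Pi.smul_apply, smul_eq_mul]
  have : (∑ j, A u i j * (a * x j + b * z j))
      = a * (∑ j, A u i j * x j) + b * (∑ j, A u i j * z j) := by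
    rw [Finset.mul_sum, Finset.mul_sum, ← Finset.sum_add_distrib]
    exact Finset.sum_congr rfl fun j _ => by ring
  rw [this]; ring

lemma sigNorm_comb_aux (x z : Fin N → ℝ) (a b : ℝ) (u : U) (y : Y) :
    sigNorm A B (a • x + b • z) u y = a * sigNorm A B x u y + b * sigNorm A B z u y := by
  simp only [sigNorm, Tvec_comb_aux]
  rw [Finset.sum_add_distrib, Finset.mul_sum, Finset.mul_sum]

lemma belUpd_mem_aux (hA : ∀ u i j, 0 ≤ A u i j) (hB : ∀ y i u, 0 ≤ B y i u)
    {π : Fin N → ℝ} (hπ : π ∈ stdSimplex' N) {u : U} {y : Y}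
    (hσ : 0 < sigNorm A B π u y) : belUpd A B π u y ∈ stdSimplex' N := by
  refine ⟨fun i => div_nonneg (Tvec_nonneg_aux hA hB hπ.1 u y i) hσ.le, ?_⟩
  simp only [belUpd]
  rw [← Finset.sum_div]
  exact div_self hσ.ne'

open scoped Classical in
lemma backup_concaveOn_aux (hA : ∀ u i j, 0 ≤ A u i j) (hB : ∀ y i u, 0 ≤ B y i u)
    {f : (Fin N → ℝ) → ℝ} (hf : ConcaveOn ℝ (stdSimplex' N) f) (u : U) :
    ConcaveOn ℝ (stdSimplex' N) (fun π => backup A B f π u) := by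
  refine ⟨convex_stdSimplex'_aux N, fun x hx z hz a b ha hb hab => ?_⟩
  simp only [backup, smul_eq_mul]
  rw [Finset.mul_sum, Finset.mul_sum, ← Finset.sum_add_distrib]
  refine Finset.sum_le_sum fun y _ => ?_
  have hσ1 : 0 ≤ sigNorm A B x u y := sigNorm_nonneg_aux hA hB hx.1 u y
  have hσ2 : 0 ≤ sigNorm A B z u y := sigNorm_nonneg_aux hA hB hz.1 u y
  have hmixσ : sigNorm A B (a • x + b • z) u y
      = a * sigNorm A B x u y + b * sigNorm A B z u y := sigNorm_comb_aux x z a b u y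
  by_cases hm : 0 < sigNorm A B (a • x + b • z) u y
  · rw [if_pos hm]
    by_cases h1 : 0 < sigNorm A B x u y
    · by_cases h2 : 0 < sigNorm A B z u y
      · -- both positive
        rw [if_pos h1, if_pos h2]
        have h1' : sigNorm A B x u y ≠ 0 := h1.ne'
        have h2' : sigNorm A B z u y ≠ 0 := h2.ne'
        have hm' : sigNorm A B (a • x + b • z) u y ≠ 0 := hm.ne'
        set σ1 := sigNorm A B x u y with hs1
        set σ2 := sigNorm A B z u y with hs2
        set σ := sigNorm A B (a • x + b • z) u y with hσdef
        have hkey : belUpd A B (a • x + b • z) u y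
            = (a * σ1 / σ) • belUpd A B x u y + (b * σ2 / σ) • belUpd A B z u y := by
          funext i
          simp only [belUpd, Pi.add_apply, Pi.smul_apply, smul_eq_mul, ← hs1, ← hs2, ← hσdef]
          rw [Tvec_comb_aux]
          field_simp
        rw [hkey]
        have hc1 : 0 ≤ a * σ1 / σ := by positivity
        have hc2 : 0 ≤ b * σ2 / σ := by positivity
        have hcsum : a * σ1 / σ + b * σ2 / σ = 1 := by
          rw [← add_div, ← hmixσ]
          exact div_self hm'
        have hconc := hf.2 (belUpd_mem_aux hA hB hx h1) (belUpd_mem_aux hA hB hz h2)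
          hc1 hc2 hcsum
        simp only [smul_eq_mul] at hconc
        have hle := mul_le_mul_of_nonneg_left hconc hm.le
        calc a * (σ1 * f (belUpd A B x u y)) + b * (σ2 * f (belUpd A B z u y))
            = σ * (a * σ1 / σ * f (belUpd A B x u y) + b * σ2 / σ * f (belUpd A B z u y)) := by
              field_simp
          _ ≤ σ * f ((a * σ1 / σ) • belUpd A B x u y + (b * σ2 / σ) • belUpd A B z u y) := hle
      · -- σ2 = 0
        have hσ2z : sigNorm A B z u y = 0 := le_antisymm (not_lt.mp h2) hσ2
        have hT2 : ∀ i, Tvec A B z u y i = 0 := by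
          intro i
          have := (Finset.sum_eq_zero_iff_of_nonneg
            (fun i _ => Tvec_nonneg_aux hA hB hz.1 u y i)).mp hσ2z
          exact this i (Finset.mem_univ i)
        have ha' : 0 < a := by
          rcases lt_or_eq_of_le ha with h | h
          · exact h
          · exfalso; rw [hmixσ, ← h, hσ2z] at hm; simp at hm
        have hbel : belUpd A B (a • x + b • z) u y = belUpd A B x u y := by
          funext i
          simp only [belUpd]
          rw [Tvec_comb_aux, hmixσ, hσ2z, hT2 i]
          simp only [mul_zero, add_zero]
          exact mul_div_mul_left _ _ ha'.ne'
        rw [if_pos h1, if_neg h2, hbel, hmixσ, hσ2z]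
        have : a * (sigNorm A B x u y * f (belUpd A B x u y)) + b * 0
            = (a * sigNorm A B x u y + b * 0) * f (belUpd A B x u y) := by ring
        exact this.le
    · -- σ1 = 0
      have hσ1z : sigNorm A B x u y = 0 := le_antisymm (not_lt.mp h1) hσ1
      have hT1 : ∀ i, Tvec A B x u y i = 0 := by
        intro i
        have := (Finset.sum_eq_zero_iff_of_nonneg
          (fun i _ => Tvec_nonneg_aux hA hB hx.1 u y i)).mp hσ1z
        exact this i (Finset.mem_univ i)
      have h2 : 0 < sigNorm A B z u y := by
        by_contra h2
        have hσ2z : sigNorm A B z u y = 0 := le_antisymm (not_lt.mp h2) hσ2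
        rw [hmixσ, hσ1z, hσ2z] at hm; simp at hm
      have hb' : 0 < b := by
        rcases lt_or_eq_of_le hb with h | h
        · exact h
        · exfalso; rw [hmixσ, ← h, hσ1z] at hm; simp at hm
      have hbel : belUpd A B (a • x + b • z) u y = belUpd A B z u y := by
        funext i
        simp only [belUpd]
        rw [Tvec_comb_aux, hmixσ, hσ1z, hT1 i]
        simp only [mul_zero, zero_add]
        exact mul_div_mul_left _ _ hb'.ne'
      rw [if_neg h1, if_pos h2, hbel, hmixσ, hσ1z]
      have : a * 0 + b * (sigNorm A B z u y * f (belUpd A B z u y))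
          = (a * 0 + b * sigNorm A B z u y) * f (belUpd A B z u y) := by ring
      exact this.le
  · rw [if_neg hm]
    have hmz : sigNorm A B (a • x + b • z) u y = 0 := by
      refine le_antisymm (not_lt.mp hm) ?_
      rw [hmixσ]
      positivity
    rw [hmixσ] at hmz
    have haσ1 : a * sigNorm A B x u y = 0 := by nlinarith [mul_nonneg ha hσ1, mul_nonneg hb hσ2]
    have hbσ2 : b * sigNorm A B z u y = 0 := by nlinarith [mul_nonneg ha hσ1, mul_nonneg hb hσ2]
    have e1 : a * (if 0 < sigNorm A B x u y then
        sigNorm A B x u y * f (belUpd A B x u y) else 0) = 0 := by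
      by_cases h1 : 0 < sigNorm A B x u y
      · have haz : a = 0 := by
          rcases mul_eq_zero.mp haσ1 with h | h
          · exact h
          · exact absurd h h1.ne'
        simp [haz]
      · simp [h1]
    have e2 : b * (if 0 < sigNorm A B z u y then
        sigNorm A B z u y * f (belUpd A B z u y) else 0) = 0 := by
      by_cases h2 : 0 < sigNorm A B z u y
      · have hbz : b = 0 := by
          rcases mul_eq_zero.mp hbσ2 with h | h
          · exact h
          · exact absurd h h2.ne'
        simp [hbz]
      · simp [h2]
    rw [e1, e2]; norm_num

end Aux

/-- **Theorem 2 (concavity of the value function).**  With concave instantaneous costs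
`g_k(·,u)` and concave terminal cost `g_T`, the value functions defined by the backward recursion
`J_T = g_T`, `J_k(π) = min_u [ g_k(π,u) + Σ_{y : σ(π,u,y) > 0} σ(π,u,y) J_{k+1}(Π(π,u,y)) ]`
are concave on `Δ^N` for every `0 ≤ k ≤ T`. -/
theorem value_function_concave
    (N : ℕ) (U Y : Type) [Fintype U] [Fintype Y]
    (A : U → Fin N → Fin N → ℝ) (B : Y → Fin N → U → ℝ)
    (hA : ∀ u i j, 0 ≤ A u i j) (hAcol : ∀ u j, ∑ i, A u i j = 1)
    (hB : ∀ y i u, 0 ≤ B y i u) (hBsum : ∀ i u, ∑ y, B y i u = 1)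
    [Nonempty U]
    (T : ℕ) (hT : 1 ≤ T)
    (g : ℕ → (Fin N → ℝ) → U → ℝ) (gT : (Fin N → ℝ) → ℝ)
    (hg : ∀ k < T, ∀ u : U, ConcaveOn ℝ (stdSimplex' N) (fun π => g k π u))
    (hgT : ConcaveOn ℝ (stdSimplex' N) gT)
    (J : ℕ → (Fin N → ℝ) → ℝ)
    (hJT : ∀ π ∈ stdSimplex' N, J T π = gT π)
    (hJk : ∀ k < T, ∀ π ∈ stdSimplex' N,
      J k π = Finset.univ.inf' Finset.univ_nonempty
        (fun u : U => g k π u + backup A B (J (k + 1)) π u)) :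
    ∀ k ≤ T, ConcaveOn ℝ (stdSimplex' N) (J k) := by
  suffices h : ∀ d k, k + d = T → ConcaveOn ℝ (stdSimplex' N) (J k) by
    intro k hk
    exact h (T - k) k (Nat.add_sub_cancel' hk)
  intro d
  induction d with
  | zero =>
    intro k hk
    rw [Nat.add_zero] at hk
    subst hk
    exact concaveOn_congr_aux hJT hgT
  | succ d ih =>
    intro k hk
    have hkT : k < T := by omega
    have hnext : ConcaveOn ℝ (stdSimplex' N) (J (k + 1)) := ih (k + 1) (by omega)
    refine concaveOn_congr_aux (hJk k hkT) ?_
    refine concaveOn_inf'_aux Finset.univ Finset.univ_nonempty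
      (convex_stdSimplex'_aux N) _ fun u _ => ?_
    exact (hg k hkT u).add (backup_concaveOn_aux hA hB hnext u)
end

section
/- (Finite piecewise-linear representation of the value function, equation (12).) In the filter setup, fix a horizon T ≥ 1 and suppose the costs are pointwise minima of finitely many linear functions: there are finite nonempty sets Γ_T ⊂ ℝ^N and Γ_k^u ⊂ ℝ^N (for 0 ≤ k ≤ T−1, u ∈ 𝒰) with g_T(π) = min_{α ∈ Γ_T} ⟨π, α⟩ and g_k(π,u) = min_{α ∈ Γ_k^u} ⟨π, α⟩ for all π ∈ Δ^N. Define J_T(π) = g_T(π) and J_k(π) = min_{u ∈ 𝒰} [ g_k(π,u) + Σ_{y ∈ 𝒴, σ(π,u,y) > 0} σ(π,u,y) · J_{k+1}( Π(π,u,y) ) ] for 0 ≤ k ≤ T−1. Then for every 0 ≤ k ≤ T there exists a finite nonempty set Γ_k ⊂ ℝ^N such that J_k(π) = min_{α ∈ Γ_k} ⟨π, α⟩ for all π ∈ Δ^N (⟨·,·⟩ the Euclidean inner product). -/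
open Finset

section myhelpers

private lemma my_mul_inf' {β : Type*} (s : Finset β) (hs : s.Nonempty) (f : β → ℝ) {c : ℝ}
    (hc : 0 ≤ c) : c * s.inf' hs f = s.inf' hs fun b => c * f b := by
  apply le_antisymm
  · exact Finset.le_inf' _ _ fun b hb => mul_le_mul_of_nonneg_left (Finset.inf'_le _ hb) hc
  · obtain ⟨b, hb, hbe⟩ := Finset.exists_mem_eq_inf' hs f
    rw [hbe]
    exact Finset.inf'_le _ hb

private lemma my_sum_inf' {β Y : Type*} [Fintype Y] [DecidableEq Y] (s : Finset β)
    (hs : s.Nonempty) (f : Y → β → ℝ) :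
    ∑ y : Y, s.inf' hs (f y) =
      (Fintype.piFinset fun _ : Y => s).inf' (Fintype.piFinset_nonempty.2 fun _ => hs)
        (fun gf => ∑ y, f y (gf y)) := by
  apply le_antisymm
  · apply Finset.le_inf'
    intro gf hg
    exact Finset.sum_le_sum fun y _ => Finset.inf'_le _ (Fintype.mem_piFinset.1 hg y)
  · choose b hb hbe using fun y => Finset.exists_mem_eq_inf' hs (f y)
    calc _ ≤ ∑ y, f y (b y) := Finset.inf'_le _ (Fintype.mem_piFinset.2 hb)
    _ = _ := Finset.sum_congr rfl fun y _ => (hbe y).symm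

private lemma my_inf'_add_inf' {β γ : Type*} (s : Finset β) (hs : s.Nonempty) (t : Finset γ)
    (ht : t.Nonempty) (f : β → ℝ) (g : γ → ℝ) :
    s.inf' hs f + t.inf' ht g = (s ×ˢ t).inf' (hs.product ht) fun p => f p.1 + g p.2 := by
  apply le_antisymm
  · refine Finset.le_inf' (hs.product ht) _ fun p hp => ?_
    rw [Finset.mem_product] at hp
    exact add_le_add (Finset.inf'_le _ hp.1) (Finset.inf'_le _ hp.2)
  · obtain ⟨b, hb, hbe⟩ := Finset.exists_mem_eq_inf' hs f
    obtain ⟨c, hc, hce⟩ := Finset.exists_mem_eq_inf' ht g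
    rw [hbe, hce]
    have hmem : (b, c) ∈ s ×ˢ t := Finset.mem_product.2 ⟨hb, hc⟩
    exact Finset.inf'_le (fun p : β × γ => f p.1 + g p.2) hmem

end myhelpers


/-- **Finite piecewise-linear representation of the value function, equation (12).**
If the costs are pointwise minima of finitely many linear functions of the belief, then so is
every value function `J_k` of the backward recursion. -/
theorem value_function_piecewise_linear
    (N : ℕ) (U Y : Type) [Fintype U] [Fintype Y]
    (A : U → Fin N → Fin N → ℝ) (B : Y → Fin N → U → ℝ)
    (hA : ∀ u i j, 0 ≤ A u i j) (hAcol : ∀ u j, ∑ i, A u i j = 1)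
    (hB : ∀ y i u, 0 ≤ B y i u) (hBsum : ∀ i u, ∑ y, B y i u = 1)
    [Nonempty U]
    (T : ℕ) (hT : 1 ≤ T)
    (g : ℕ → (Fin N → ℝ) → U → ℝ) (gT : (Fin N → ℝ) → ℝ)
    (ΓT : Finset (Fin N → ℝ)) (hΓT : ΓT.Nonempty)
    (Γ : ℕ → U → Finset (Fin N → ℝ)) (hΓ : ∀ k, k < T → ∀ u, (Γ k u).Nonempty)
    (hgT : ∀ π ∈ stdSimplex' N, gT π = ΓT.inf' hΓT (fun α => ∑ i, π i * α i))
    (hg : ∀ k, ∀ hk : k < T, ∀ u : U, ∀ π ∈ stdSimplex' N,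
      g k π u = (Γ k u).inf' (hΓ k hk u) (fun α => ∑ i, π i * α i))
    (J : ℕ → (Fin N → ℝ) → ℝ)
    (hJT : ∀ π ∈ stdSimplex' N, J T π = gT π)
    (hJk : ∀ k < T, ∀ π ∈ stdSimplex' N,
      J k π = Finset.univ.inf' Finset.univ_nonempty
        (fun u : U => g k π u + backup A B (J (k + 1)) π u)) :
    ∀ k ≤ T, ∃ Γk : Finset (Fin N → ℝ), ∃ h : Γk.Nonempty,
      ∀ π ∈ stdSimplex' N, J k π = Γk.inf' h (fun α => ∑ i, π i * α i) := by
  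
  classical
  suffices H : ∀ m k, k + m = T → ∃ Γk : Finset (Fin N → ℝ), ∃ h : Γk.Nonempty,
      ∀ π ∈ stdSimplex' N, J k π = Γk.inf' h (fun α => ∑ i, π i * α i) by
    intro k hk
    exact H (T - k) k (by omega)
  intro m
  induction m with
  | zero =>
    intro k hk
    obtain rfl : k = T := by omega
    exact ⟨ΓT, hΓT, fun π hπ => by rw [hJT π hπ, hgT π hπ]⟩
  | succ m ih =>
    intro k hk
    have hkT : k < T := by omega
    obtain ⟨Γn, hn, hJn⟩ := ih (k + 1) (by omega)
    have hpi : (Fintype.piFinset fun _ : Y => Γn).Nonempty :=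
      Fintype.piFinset_nonempty.2 fun _ => hn
    set emb : U → (Fin N → ℝ) × (Y → Fin N → ℝ) → (Fin N → ℝ) := fun u p =>
      fun j => p.1 j + ∑ y, ∑ i, B y i u * A u i j * p.2 y i with hemb
    set Γ' : U → Finset (Fin N → ℝ) := fun u =>
      ((Γ k u) ×ˢ (Fintype.piFinset fun _ : Y => Γn)).image (emb u) with hΓ'def
    have hΓ' : ∀ u, (Γ' u).Nonempty := fun u => ((hΓ k hkT u).product hpi).image _
    refine ⟨Finset.univ.biUnion Γ', Finset.univ_nonempty.biUnion fun u _ => hΓ' u, ?_⟩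
    intro π hπ
    have hTnn : ∀ u y i, 0 ≤ Tvec A B π u y i := fun u y i =>
      mul_nonneg (hB y i u) (Finset.sum_nonneg fun j _ => mul_nonneg (hA u i j) (hπ.1 j))
    have hσnn : ∀ u y, 0 ≤ sigNorm A B π u y := fun u y =>
      Finset.sum_nonneg fun i _ => hTnn u y i
    have key : ∀ u y (α : Fin N → ℝ),
        ∑ j, π j * ∑ i, B y i u * A u i j * α i = ∑ i, Tvec A B π u y i * α i := by
      intro u y α
      simp only [Tvec, Finset.mul_sum, Finset.sum_mul]
      rw [Finset.sum_comm]
      exact Finset.sum_congr rfl fun i _ => Finset.sum_congr rfl fun j _ => by ring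
    rw [hJk k hkT π hπ, Finset.inf'_biUnion (Hs := Finset.univ_nonempty) (Ht := hΓ')]
    refine Finset.inf'_congr _ rfl fun u _ => ?_
    have term : ∀ y, (if 0 < sigNorm A B π u y then
          sigNorm A B π u y * J (k+1) (belUpd A B π u y) else 0)
        = Γn.inf' hn fun α => ∑ i, Tvec A B π u y i * α i := by
      intro y
      by_cases h : 0 < sigNorm A B π u y
      · have hPmem : belUpd A B π u y ∈ stdSimplex' N := by
          constructor
          · intro i; exact div_nonneg (hTnn u y i) (hσnn u y)
          · simp only [belUpd]
            rw [← Finset.sum_div]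
            exact div_self (ne_of_gt h)
        rw [if_pos h, hJn _ hPmem, my_mul_inf' _ _ _ h.le]
        refine Finset.inf'_congr _ rfl fun α _ => ?_
        rw [Finset.mul_sum]
        refine Finset.sum_congr rfl fun i _ => ?_
        simp only [belUpd]
        have hσ : sigNorm A B π u y ≠ 0 := ne_of_gt h
        field_simp
      · rw [if_neg h]
        have hσ0 : sigNorm A B π u y = 0 := le_antisymm (not_lt.1 h) (hσnn u y)
        have hT0 : ∀ i, Tvec A B π u y i = 0 := fun i =>
          (Finset.sum_eq_zero_iff_of_nonneg (fun i _ => hTnn u y i)).1 hσ0 i (Finset.mem_univ i)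
        symm
        apply Finset.inf'_eq_of_forall
        intro α _
        simp [hT0]
    have hback : backup A B (J (k+1)) π u =
        (Fintype.piFinset fun _ : Y => Γn).inf' hpi
          fun gf => ∑ j, π j * ∑ y, ∑ i, B y i u * A u i j * gf y i := by
      unfold backup
      rw [Finset.sum_congr rfl fun y _ => term y, my_sum_inf' Γn hn _]
      refine Finset.inf'_congr _ rfl fun gf _ => ?_
      rw [show (∑ y, ∑ i, Tvec A B π u y i * gf y i)
            = ∑ y, ∑ j, π j * ∑ i, B y i u * A u i j * gf y i from
          Finset.sum_congr rfl fun y _ => (key u y (gf y)).symm]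
      rw [Finset.sum_comm]
      exact Finset.sum_congr rfl fun j _ => (Finset.mul_sum _ _ _).symm
    rw [hg k hkT u π hπ, hback, my_inf'_add_inf' _ (hΓ k hkT u) _ hpi]
    simp only [hΓ'def]
    rw [Finset.inf'_image]
    refine Finset.inf'_congr _ rfl fun p hp => ?_
    simp only [Function.comp_apply, hemb]
    rw [← Finset.sum_add_distrib]
    exact Finset.sum_congr rfl fun j _ => (mul_add _ _ _).symm
end
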